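/- arXiv:1706.03158 — 9 statements merged into one kernel-verified Lean document; each statement's English description precedes it below -/
import Mathlib

section
/- Let Q be an n×n column-stochastic matrix (nonnegative entries, columns summing to 1) all of whose entries are strictly greater than ε/n for some ε > 0. If α and β are nonnegative vectors in ℝⁿ with ‖α‖₁ = ‖β‖₁ = γ, then ‖Qβ - Qα‖₁ ≤ 2γ(1 - ε). -/
/-- A column-stochastic matrix all of whose entries exceed `ε/n` contracts pairs of
nonnegative vectors of equal ℓ₁-mass `γ`: `‖Qβ - Qα‖₁ ≤ 2γ(1 - ε)`. -/
theorem stmt1 (n : ℕ) (Q : Matrix (Fin n) (Fin n) ℝ) (ε γ : ℝ) (hε : 0 < ε)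
    (hQ0 : ∀ i j, 0 ≤ Q i j) (hQ1 : ∀ j, ∑ i, Q i j = 1)
    (hQε : ∀ i j, ε / (n : ℝ) < Q i j)
    (α β : Fin n → ℝ) (hα0 : ∀ i, 0 ≤ α i) (hβ0 : ∀ i, 0 ≤ β i)
    (hα1 : ∑ i, |α i| = γ) (hβ1 : ∑ i, |β i| = γ) :
    ∑ i, |(Q.mulVec β - Q.mulVec α) i| ≤ 2 * γ * (1 - ε) := by
  rcases Nat.eq_zero_or_pos n with h0 | hn
  · subst h0
    simp at hα1 ⊢
    nlinarith
  have hnR : (0:ℝ) < n := by exact_mod_cast hn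
  have hQε' : ∀ i j, 0 ≤ Q i j - ε / n := fun i j => le_of_lt (by linarith [hQε i j])
  -- ε < 1
  have hε1 : ε ≤ 1 := by
    have j : Fin n := ⟨0, hn⟩
    have hlt : ∑ i : Fin n, ε / n < ∑ i, Q i j :=
      Finset.sum_lt_sum_of_nonempty (Finset.univ_nonempty_iff.2 ⟨j⟩) (fun i _ => hQε i j)
    rw [hQ1 j, Finset.sum_const, Finset.card_univ, Fintype.card_fin, nsmul_eq_mul,
      mul_div_cancel₀ _ (ne_of_gt hnR)] at hlt
    linarith
  have hsa : ∑ i, α i = γ := by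
    rw [← hα1]; exact Finset.sum_congr rfl fun i _ => (abs_of_nonneg (hα0 i)).symm
  have hsb : ∑ i, β i = γ := by
    rw [← hβ1]; exact Finset.sum_congr rfl fun i _ => (abs_of_nonneg (hβ0 i)).symm
  have hγ : 0 ≤ γ := by
    rw [← hα1]; exact Finset.sum_nonneg fun i _ => abs_nonneg _
  have key : ∀ i, |(Q.mulVec β - Q.mulVec α) i| ≤ ∑ j, (Q i j - ε / n) * |β j - α j| := by
    intro i
    have h1 : (Q.mulVec β - Q.mulVec α) i = ∑ j, (Q i j - ε / n) * (β j - α j) := by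
      simp only [Pi.sub_apply, Matrix.mulVec, dotProduct, sub_mul, mul_sub,
        Finset.sum_sub_distrib, ← Finset.mul_sum, hsa, hsb]
      ring
    rw [h1]
    calc |∑ j, (Q i j - ε / n) * (β j - α j)|
        ≤ ∑ j, |(Q i j - ε / n) * (β j - α j)| := Finset.abs_sum_le_sum_abs _ _
      _ = ∑ j, (Q i j - ε / n) * |β j - α j| := by
          refine Finset.sum_congr rfl fun j _ => ?_
          rw [abs_mul, abs_of_nonneg (hQε' i j)]
  calc ∑ i, |(Q.mulVec β - Q.mulVec α) i|
      ≤ ∑ i, ∑ j, (Q i j - ε / n) * |β j - α j| :=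
        Finset.sum_le_sum fun i _ => key i
    _ = ∑ j, (1 - ε) * |β j - α j| := by
        rw [Finset.sum_comm]
        refine Finset.sum_congr rfl fun j _ => ?_
        rw [← Finset.sum_mul, Finset.sum_sub_distrib, hQ1 j, Finset.sum_const,
          Finset.card_univ, Fintype.card_fin, nsmul_eq_mul,
          mul_div_cancel₀ _ (ne_of_gt hnR)]
    _ ≤ ∑ j, (1 - ε) * (|β j| + |α j|) := by
        refine Finset.sum_le_sum fun j _ => ?_
        exact mul_le_mul_of_nonneg_left (abs_sub _ _) (by linarith)
    _ = 2 * γ * (1 - ε) := by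
        rw [← Finset.mul_sum, Finset.sum_add_distrib, hα1, hβ1]; ring
end

section
/- Let Q be an n×n matrix with real entries such that each column sums to 1. Then the maximum of ‖Qδ‖₁ over vectors δ with Σᵢ δᵢ = 0 and ‖δ‖₁ = 1 equals (1/2) · max over pairs (j,k) of Σᵢ |Qᵢⱼ - Qᵢₖ| (the Markov–Dobrushin coefficient). -/
/-- The induced ℓ₁-norm of a matrix with unit column sums, restricted to the tangent
space `{δ : ∑ δᵢ = 0}`, equals half the maximal ℓ₁-distance between pairs of columns
(the Markov–Dobrushin coefficient). -/
theorem stmt3 (n : ℕ) (hn : 0 < n) (Q : Matrix (Fin n) (Fin n) ℝ)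
    (hQ1 : ∀ j, ∑ i, Q i j = 1) :
    sSup {x : ℝ | ∃ δ : Fin n → ℝ,
        (∑ i, δ i = 0) ∧ (∑ i, |δ i| = 1) ∧ x = ∑ i, |Q.mulVec δ i|}
      = (1 / 2) * sSup {y : ℝ | ∃ j k : Fin n, y = ∑ i, |Q i j - Q i k|} := by
  set S := {x : ℝ | ∃ δ : Fin n → ℝ,
        (∑ i, δ i = 0) ∧ (∑ i, |δ i| = 1) ∧ x = ∑ i, |Q.mulVec δ i|} with hS
  set T := {y : ℝ | ∃ j k : Fin n, y = ∑ i, |Q i j - Q i k|} with hT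
  have hTfin : T.Finite := by
    have : T = Set.range (fun p : Fin n × Fin n => ∑ i, |Q i p.1 - Q i p.2|) := by
      ext y; constructor
      · rintro ⟨j, k, rfl⟩; exact ⟨(j, k), rfl⟩
      · rintro ⟨⟨j, k⟩, rfl⟩; exact ⟨j, k, rfl⟩
    rw [this]; exact Set.finite_range _
  have hTne : T.Nonempty := ⟨0, ⟨0, hn⟩, ⟨0, hn⟩, by simp⟩
  have hTbdd : BddAbove T := hTfin.bddAbove
  set M := sSup T with hM
  have hMmem : M ∈ T := hTne.csSup_mem hTfin
  have hMub : ∀ y ∈ T, y ≤ M := fun y hy => le_csSup hTbdd hy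
  -- upper bound for S
  have hub : ∀ x ∈ S, x ≤ (1/2) * M := by
    rintro x ⟨δ, h0, h1, rfl⟩
    set p : Fin n → ℝ := fun i => max (δ i) 0 with hp
    set q : Fin n → ℝ := fun i => max (-δ i) 0 with hq
    have hpq : ∀ i, δ i = p i - q i := by
      intro i; simp only [hp, hq]; rcases le_total (δ i) 0 with h | h
      · rw [max_eq_right h, max_eq_left (by linarith : (0:ℝ) ≤ -δ i)]; ring
      · rw [max_eq_left h, max_eq_right (by linarith : -δ i ≤ (0:ℝ))]; ring
    have habs : ∀ i, |δ i| = p i + q i := by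
      intro i; simp only [hp, hq]; rcases le_total (δ i) 0 with h | h
      · rw [abs_of_nonpos h, max_eq_right h, max_eq_left (by linarith : (0:ℝ) ≤ -δ i)]; ring
      · rw [abs_of_nonneg h, max_eq_left h, max_eq_right (by linarith : -δ i ≤ (0:ℝ))]; ring
    have hpnn : ∀ i, 0 ≤ p i := fun i => le_max_right _ _
    have hqnn : ∀ i, 0 ≤ q i := fun i => le_max_right _ _
    have hsump : ∑ i, p i = 1/2 := by
      have e0 := h0; have e1 := h1
      simp only [hpq] at e0; simp only [habs] at e1
      rw [Finset.sum_sub_distrib] at e0; rw [Finset.sum_add_distrib] at e1; linarith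
    have hsumq : ∑ i, q i = 1/2 := by
      have e0 := h0
      simp only [hpq] at e0
      rw [Finset.sum_sub_distrib] at e0; linarith
    have key : ∀ i, Q.mulVec δ i = 2 * ∑ j, ∑ k, p j * q k * (Q i j - Q i k) := by
      intro i
      have expand : ∑ j, ∑ k, p j * q k * (Q i j - Q i k)
          = (∑ j, Q i j * p j) * (∑ k, q k) - (∑ j, p j) * (∑ k, Q i k * q k) := by
        rw [Finset.sum_mul, Finset.sum_mul, ← Finset.sum_sub_distrib]
        refine Finset.sum_congr rfl fun j _ => ?_
        rw [Finset.mul_sum, Finset.mul_sum, ← Finset.sum_sub_distrib]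
        exact Finset.sum_congr rfl fun k _ => by ring
      have hmv : Q.mulVec δ i = ∑ j, Q i j * δ j := by
        simp [Matrix.mulVec, dotProduct]
      rw [hmv, expand, hsump, hsumq]
      have : ∑ j, Q i j * δ j = ∑ j, (Q i j * p j - Q i j * q j) := by
        refine Finset.sum_congr rfl fun j _ => by rw [hpq j]; ring
      rw [this, Finset.sum_sub_distrib]; ring
    calc ∑ i, |Q.mulVec δ i|
        ≤ ∑ i, 2 * ∑ j, ∑ k, p j * q k * |Q i j - Q i k| := by
          refine Finset.sum_le_sum fun i _ => ?_
          rw [key i, abs_mul, abs_two]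
          refine mul_le_mul_of_nonneg_left ?_ (by norm_num)
          calc |∑ j, ∑ k, p j * q k * (Q i j - Q i k)|
              ≤ ∑ j, |∑ k, p j * q k * (Q i j - Q i k)| := Finset.abs_sum_le_sum_abs _ _
            _ ≤ ∑ j, ∑ k, p j * q k * |Q i j - Q i k| := by
                refine Finset.sum_le_sum fun j _ => ?_
                refine le_trans (Finset.abs_sum_le_sum_abs _ _) ?_
                refine Finset.sum_le_sum fun k _ => ?_
                rw [abs_mul, abs_mul, abs_of_nonneg (hpnn j), abs_of_nonneg (hqnn k)]
      _ = 2 * ∑ j, ∑ k, p j * q k * ∑ i, |Q i j - Q i k| := by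
          rw [← Finset.mul_sum]
          congr 1
          rw [Finset.sum_comm]
          refine Finset.sum_congr rfl fun j _ => ?_
          rw [Finset.sum_comm]
          refine Finset.sum_congr rfl fun k _ => ?_
          rw [Finset.mul_sum]
      _ ≤ 2 * ∑ j, ∑ k, p j * q k * M := by
          refine mul_le_mul_of_nonneg_left ?_ (by norm_num)
          refine Finset.sum_le_sum fun j _ => Finset.sum_le_sum fun k _ => ?_
          exact mul_le_mul_of_nonneg_left (hMub _ ⟨j, k, rfl⟩) (mul_nonneg (hpnn j) (hqnn k))
      _ = (1/2) * M := by
          simp only [← Finset.sum_mul, ← Finset.mul_sum]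
          rw [hsump, hsumq]; ring
  -- attainment
  rcases Nat.lt_or_ge n 2 with h2 | h2
  · -- n = 1
    have hn1 : n = 1 := by omega
    subst hn1
    have hSe : S = (∅ : Set ℝ) := by
      ext x
      simp only [hS, Set.mem_setOf_eq, Set.mem_empty_iff_false, iff_false]
      rintro ⟨δ, h0, h1, -⟩
      rw [Fin.sum_univ_one] at h0 h1
      rw [h0] at h1; simp at h1
    have hTe : T = ({0} : Set ℝ) := by
      ext y
      simp only [hT, Set.mem_setOf_eq, Set.mem_singleton_iff]
      constructor
      · rintro ⟨j, k, rfl⟩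
        rw [Subsingleton.elim j k]; simp
      · rintro rfl; exact ⟨0, 0, by simp⟩
    rw [hSe, Real.sSup_empty, hM, hTe, csSup_singleton]; norm_num
  · -- n ≥ 2
    obtain ⟨j, k, hjkne, hMeq⟩ : ∃ j k : Fin n, j ≠ k ∧ M = ∑ i, |Q i j - Q i k| := by
      obtain ⟨j0, k0, hjk⟩ := hMmem
      by_cases h : j0 = k0
      · refine ⟨⟨0, by omega⟩, ⟨1, by omega⟩, by simp [Fin.ext_iff], ?_⟩
        have hM0 : M = 0 := by rw [hjk, h]; simp
        have hle := hMub _ ⟨⟨0, by omega⟩, ⟨1, by omega⟩, rfl⟩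
        have hge : (0:ℝ) ≤ ∑ i, |Q i ⟨0, by omega⟩ - Q i ⟨1, by omega⟩| :=
          Finset.sum_nonneg fun i _ => abs_nonneg _
        linarith
      · exact ⟨j0, k0, h, hjk⟩
    set δ : Fin n → ℝ :=
      fun i => (1/2) * (if i = j then 1 else 0) - (1/2) * (if i = k then 1 else 0) with hδ
    have hsum0 : ∑ i, δ i = 0 := by
      simp [hδ, Finset.sum_sub_distrib, ← Finset.mul_sum, Finset.sum_ite_eq']
    have habs1 : ∑ i, |δ i| = 1 := by
      have : ∀ i, |δ i| = (1/2) * (if i = j then 1 else 0) + (1/2) * (if i = k then 1 else 0) := by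
        intro i
        by_cases hij : i = j
        · have h1 : δ i = 1/2 := by simp [hδ, hij, hjkne]
          rw [h1, if_pos hij, if_neg (by rw [hij]; exact hjkne),
            abs_of_nonneg (by norm_num : (0:ℝ) ≤ 1/2)]
          ring
        · by_cases hik : i = k
          · have h1 : δ i = -(1/2) := by simp [hδ, hij, hik, Ne.symm hjkne]
            rw [h1, if_neg hij, if_pos hik, abs_of_nonpos (by norm_num : -(1/2:ℝ) ≤ 0)]
            ring
          · have h1 : δ i = 0 := by simp [hδ, hij, hik]
            rw [h1, if_neg hij, if_neg hik, abs_zero]; ring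
      rw [Finset.sum_congr rfl fun i _ => this i, Finset.sum_add_distrib,
        ← Finset.mul_sum, ← Finset.mul_sum]
      simp only [Finset.sum_ite_eq', Finset.mem_univ, if_true]
      norm_num
    have hmv : ∀ i, Q.mulVec δ i = (1/2) * (Q i j - Q i k) := by
      intro i
      simp only [Matrix.mulVec, dotProduct, hδ, mul_sub, mul_ite, mul_one, mul_zero,
        Finset.sum_sub_distrib]
      simp only [Finset.sum_ite_eq', Finset.mem_univ, if_true]
      ring
    have hmemS : (1/2) * M ∈ S := by
      refine ⟨δ, hsum0, habs1, ?_⟩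
      rw [Finset.sum_congr rfl fun i _ => by rw [hmv i, abs_mul, abs_of_nonneg (by norm_num : (0:ℝ) ≤ 1/2)],
        ← Finset.mul_sum, hMeq]
    exact (IsGreatest.csSup_eq ⟨hmemS, fun x hx => hub x hx⟩)
end

section
/- Fix γ ∈ (0,1] and let C be an n×n row-stochastic matrix. Define f : Sₙ₋₁ → Sₙ₋₁ by f(p)ⱼ = (1 − e^{−γpⱼ})pⱼ + Σᵢ Cᵢⱼ e^{−γpᵢ} pᵢ. Then f is a contraction in the ℓ₁ norm: for all probability vectors p, q, ‖f(q) − f(p)‖₁ ≤ ‖q − p‖₁. -/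
open Real Finset

private lemma gderiv (γ x : ℝ) : HasDerivAt (fun x => Real.exp (-(γ * x)) * x)
    (Real.exp (-(γ * x)) * (1 - γ * x)) x := by
  have h1 : HasDerivAt (fun x : ℝ => -(γ * x)) (-γ) x := by
    have h := (hasDerivAt_id x).const_mul (-γ)
    simp only [id_eq, id, mul_one, neg_mul] at h
    exact h
  have h2 := h1.exp.mul (hasDerivAt_id' x)
  exact h2.congr_deriv (by ring)

private lemma g_mono {γ : ℝ} (hγ0 : 0 < γ) (hγ1 : γ ≤ 1) :
    MonotoneOn (fun x => Real.exp (-(γ * x)) * x) (Set.Icc (0:ℝ) 1) := by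
  apply monotoneOn_of_deriv_nonneg (convex_Icc 0 1)
  · exact Continuous.continuousOn (by continuity)
  · intro x hx; exact (gderiv γ x).differentiableAt.differentiableWithinAt
  · intro x hx
    rw [interior_Icc] at hx
    rw [(gderiv γ x).deriv]
    have hx0 := hx.1
    have hx1 := hx.2
    have h3 : γ * x ≤ 1 := by nlinarith
    have := (Real.exp_pos (-(γ * x))).le
    nlinarith

private lemma h_mono {γ : ℝ} (hγ0 : 0 < γ) (hγ1 : γ ≤ 1) :
    MonotoneOn (fun x => x - Real.exp (-(γ * x)) * x) (Set.Icc (0:ℝ) 1) := by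
  apply monotoneOn_of_deriv_nonneg (convex_Icc 0 1)
  · exact Continuous.continuousOn (by continuity)
  · intro x hx
    exact ((hasDerivAt_id' x).sub (gderiv γ x)).differentiableAt.differentiableWithinAt
  · intro x hx
    rw [interior_Icc] at hx
    rw [show deriv (fun x => x - Real.exp (-(γ * x)) * x) x = 1 - Real.exp (-(γ * x)) * (1 - γ * x) from
      ((hasDerivAt_id' x).sub (gderiv γ x)).deriv]
    have hx0 := hx.1
    rcases le_total (γ * x) 1 with h | h
    · have h1 : Real.exp (-(γ * x)) ≤ 1 := Real.exp_le_one_iff.mpr (by nlinarith)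
      have h2 := (Real.exp_pos (-(γ * x))).le
      nlinarith
    · have h2 := (Real.exp_pos (-(γ * x))).le
      nlinarith

/-- For `γ ∈ (0,1]` and `C` row-stochastic, the exponential-influence map
`f(p)ⱼ = (1 − e^{−γpⱼ})pⱼ + Σᵢ Cᵢⱼ e^{−γpᵢ} pᵢ` is an ℓ₁-contraction on the simplex. -/
theorem stmt7 (n : ℕ) (γ : ℝ) (hγ : γ ∈ Set.Ioc (0 : ℝ) 1)
    (C : Matrix (Fin n) (Fin n) ℝ)
    (hC0 : ∀ i j, 0 ≤ C i j) (hC1 : ∀ i, ∑ j, C i j = 1)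
    (f : (Fin n → ℝ) → (Fin n → ℝ))
    (hf : ∀ p j, f p j = (1 - Real.exp (-(γ * p j))) * p j
        + ∑ i, C i j * (Real.exp (-(γ * p i)) * p i)) :
    ∀ p q : Fin n → ℝ, (∀ i, 0 ≤ p i) → (∑ i, p i = 1) →
      (∀ i, 0 ≤ q i) → (∑ i, q i = 1) →
      ∑ j, |f q j - f p j| ≤ ∑ j, |q j - p j| := by
  obtain ⟨hγ0, hγ1⟩ := hγ
  intro p q hp hps hq hqs
  set g : ℝ → ℝ := fun x => Real.exp (-(γ * x)) * x with hgdef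
  have hgval : ∀ x, g x = Real.exp (-(γ * x)) * x := fun _ => rfl
  have hmem : ∀ (r : Fin n → ℝ), (∀ i, 0 ≤ r i) → (∑ i, r i = 1) →
      ∀ i, r i ∈ Set.Icc (0:ℝ) 1 := by
    intro r hr hrs i
    refine ⟨hr i, ?_⟩
    calc r i ≤ ∑ j, r j := Finset.single_le_sum (fun j _ => hr j) (mem_univ i)
    _ = 1 := hrs
  have hpm := hmem p hp hps
  have hqm := hmem q hq hqs
  have key : ∀ i, |(q i - g (q i)) - (p i - g (p i))| + |g (q i) - g (p i)|
      = |q i - p i| := by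
    intro i
    rcases le_total (p i) (q i) with h | h
    · have h1 : g (p i) ≤ g (q i) := g_mono hγ0 hγ1 (hpm i) (hqm i) h
      have h2 : p i - g (p i) ≤ q i - g (q i) := h_mono hγ0 hγ1 (hpm i) (hqm i) h
      rw [abs_of_nonneg (by linarith), abs_of_nonneg (by linarith),
        abs_of_nonneg (by linarith)]
      ring
    · have h1 : g (q i) ≤ g (p i) := g_mono hγ0 hγ1 (hqm i) (hpm i) h
      have h2 : q i - g (q i) ≤ p i - g (p i) := h_mono hγ0 hγ1 (hqm i) (hpm i) h
      rw [abs_of_nonpos (by linarith), abs_of_nonpos (by linarith),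
        abs_of_nonpos (by linarith)]
      ring
  have expand : ∀ (r : Fin n → ℝ) (j : Fin n),
      f r j = (r j - g (r j)) + ∑ i, C i j * g (r i) := by
    intro r j
    rw [hf]
    simp only [hgval]
    ring
  have step : ∀ j, |f q j - f p j| ≤
      |(q j - g (q j)) - (p j - g (p j))| + ∑ i, C i j * |g (q i) - g (p i)| := by
    intro j
    have hsplit : (∑ i, C i j * (g (q i) - g (p i)))
        = (∑ i, C i j * g (q i)) - ∑ i, C i j * g (p i) := by
      rw [← Finset.sum_sub_distrib]
      exact Finset.sum_congr rfl fun i _ => by ring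
    have heq : f q j - f p j = ((q j - g (q j)) - (p j - g (p j)))
        + ∑ i, C i j * (g (q i) - g (p i)) := by
      rw [expand, expand, hsplit]; ring
    rw [heq]
    refine le_trans (abs_add_le _ _) (add_le_add_right ?_ _)
    refine le_trans (Finset.abs_sum_le_sum_abs _ _) ?_
    apply Finset.sum_le_sum
    intro i _
    rw [abs_mul, abs_of_nonneg (hC0 i j)]
  calc ∑ j, |f q j - f p j|
      ≤ ∑ j, (|(q j - g (q j)) - (p j - g (p j))| + ∑ i, C i j * |g (q i) - g (p i)|) :=
        Finset.sum_le_sum fun j _ => step j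
    _ = ∑ j, |(q j - g (q j)) - (p j - g (p j))| + ∑ j, |g (q j) - g (p j)| := by
        rw [Finset.sum_add_distrib]
        congr 1
        rw [Finset.sum_comm]
        apply Finset.sum_congr rfl
        intro i _
        rw [← Finset.sum_mul, hC1, one_mul]
    _ = ∑ j, (|(q j - g (q j)) - (p j - g (p j))| + |g (q j) - g (p j)|) := by
        rw [Finset.sum_add_distrib]
    _ = ∑ j, |q j - p j| := Finset.sum_congr rfl fun j _ => key j
end

section
/- Fix γ ∈ (0,1] and let C be an irreducible row-stochastic n×n matrix with Frobenius–Perron left eigenvector c (positive entries, Cᵀc = c, Σᵢ cᵢ = 1). If a probability vector p satisfies (diag(1 − e^{−γp}) + Cᵀ diag(e^{−γp})) p = p, then there exists κ > 0 with pᵢ e^{−γpᵢ} = κ cᵢ for all i. -/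
open Matrix

/-- For `γ ∈ (0,1]` and `C` irreducible row-stochastic with positive left Perron vector
`c`, any fixed point `p` of `p ↦ (diag(1 − e^{−γp}) + Cᵀ diag(e^{−γp})) p` in the simplex
satisfies `pᵢ e^{−γpᵢ} = κ cᵢ` for some `κ > 0`. -/
theorem stmt8 (n : ℕ) (γ : ℝ) (hγ : γ ∈ Set.Ioc (0 : ℝ) 1)
    (C : Matrix (Fin n) (Fin n) ℝ)
    (hC0 : ∀ i j, 0 ≤ C i j) (hC1 : ∀ i, ∑ j, C i j = 1)
    (hirr : ∀ i j, ∃ m : ℕ, 0 < m ∧ 0 < (C ^ m) i j)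
    (c : Fin n → ℝ) (hc0 : ∀ i, 0 < c i) (hc1 : ∑ i, c i = 1)
    (hcC : Cᵀ.mulVec c = c)
    (p : Fin n → ℝ) (hp0 : ∀ i, 0 ≤ p i) (hp1 : ∑ i, p i = 1)
    (hfix : ∀ j, (1 - Real.exp (-(γ * p j))) * p j
        + ∑ i, C i j * (Real.exp (-(γ * p i)) * p i) = p j) :
    ∃ κ : ℝ, 0 < κ ∧ ∀ i, p i * Real.exp (-(γ * p i)) = κ * c i := by
  have hn : 0 < n := by
    rcases Nat.eq_zero_or_pos n with h | h
    · subst h; simp at hp1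
    · exact h
  haveI : Nonempty (Fin n) := Fin.pos_iff_nonempty.mp hn
  set q : Fin n → ℝ := fun i => Real.exp (-(γ * p i)) * p i with hqdef
  have hq0 : ∀ i, 0 ≤ q i := fun i =>
    mul_nonneg (Real.exp_pos _).le (hp0 i)
  have hq : ∀ j, ∑ i, C i j * q i = q j := by
    intro j
    have := hfix j
    simp only [hqdef]
    nlinarith [this]
  have hcCj : ∀ j, ∑ i, C i j * c i = c j := by
    intro j
    have := congrFun hcC j
    simpa [Matrix.mulVec, dotProduct, Matrix.transpose_apply] using this
  -- pow entries nonneg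
  have hCm0 : ∀ m : ℕ, 0 < m → ∀ k j, 0 ≤ (C ^ m) k j := by
    intro m
    induction m with
    | zero => intro h; omega
    | succ m ih =>
      intro _ k j
      rcases Nat.eq_zero_or_pos m with hm | hm
      · subst hm; simpa using hC0 k j
      · rw [pow_succ, Matrix.mul_apply]
        exact Finset.sum_nonneg fun l _ => mul_nonneg (ih hm k l) (hC0 l j)
  -- choose minimizer of q i / c i
  obtain ⟨j0, -, hj0⟩ := Finset.exists_min_image Finset.univ
    (fun i => q i / c i) ⟨Classical.arbitrary (Fin n), Finset.mem_univ _⟩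
  set t : ℝ := q j0 / c j0 with htdef
  have ht : ∀ i, t * c i ≤ q i := by
    intro i
    have := hj0 i (Finset.mem_univ i)
    rw [div_le_div_iff₀ (hc0 j0) (hc0 i)] at this
    have hcj0 := hc0 j0
    calc t * c i = q j0 * c i / c j0 := by rw [htdef]; ring
      _ ≤ q i := by
        rw [div_le_iff₀ hcj0]
        linarith [this]
  set r : Fin n → ℝ := fun i => q i - t * c i with hrdef
  have hr0 : ∀ i, 0 ≤ r i := fun i => by simp [hrdef]; linarith [ht i]
  have hrj0 : r j0 = 0 := by
    simp [hrdef, htdef, div_mul_cancel₀ _ (hc0 j0).ne']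
  have hrfix : ∀ j, ∑ i, C i j * r i = r j := by
    intro j
    simp only [hrdef, mul_sub]
    rw [Finset.sum_sub_distrib]
    have : ∑ i, C i j * (t * c i) = t * ∑ i, C i j * c i := by
      rw [Finset.mul_sum]; congr 1; ext i; ring
    rw [this, hcCj j, hq j]
  -- iterate: (C^m)ᵀ r = r
  have hrm : ∀ m : ℕ, ∀ j, ∑ k, (C ^ m) k j * r k = r j := by
    intro m
    induction m with
    | zero => intro j; simp [Matrix.one_apply]
    | succ m ih =>
      intro j
      rw [pow_succ]
      have : ∀ k, (C ^ m * C) k j = ∑ l, (C ^ m) k l * C l j := fun k =>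
        Matrix.mul_apply
      calc ∑ k, (C ^ m * C) k j * r k
          = ∑ k, ∑ l, (C ^ m) k l * C l j * r k := by
            refine Finset.sum_congr rfl fun k _ => ?_
            rw [this k, Finset.sum_mul]
        _ = ∑ l, C l j * ∑ k, (C ^ m) k l * r k := by
            rw [Finset.sum_comm]
            refine Finset.sum_congr rfl fun l _ => ?_
            rw [Finset.mul_sum]
            refine Finset.sum_congr rfl fun k _ => by ring
        _ = ∑ l, C l j * r l := by
            refine Finset.sum_congr rfl fun l _ => by rw [ih l]
        _ = r j := hrfix j
  -- r = 0
  have hr : ∀ i, r i = 0 := by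
    intro i
    by_contra h
    have hri : 0 < r i := lt_of_le_of_ne (hr0 i) (Ne.symm h)
    obtain ⟨m, hm, hCmi⟩ := hirr i j0
    have hsum : ∑ k, (C ^ m) k j0 * r k = 0 := by rw [hrm m j0, hrj0]
    have hterm : (C ^ m) i j0 * r i ≤ 0 := by
      have : ∀ k ∈ Finset.univ, 0 ≤ (C ^ m) k j0 * r k := fun k _ =>
        mul_nonneg (hCm0 m hm k j0) (hr0 k)
      calc (C ^ m) i j0 * r i ≤ ∑ k, (C ^ m) k j0 * r k :=
            Finset.single_le_sum this (Finset.mem_univ i)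
        _ = 0 := hsum
    nlinarith
  have hqt : ∀ i, q i = t * c i := fun i => by
    have := hr i; simp [hrdef] at this; linarith
  -- t > 0
  have hex : ∃ i, 0 < p i := by
    by_contra h
    push_neg at h
    have : ∀ i ∈ Finset.univ, p i = 0 := fun i _ => le_antisymm (h i) (hp0 i)
    rw [Finset.sum_congr rfl this] at hp1
    simp at hp1
  obtain ⟨i0, hi0⟩ := hex
  have hqi0 : 0 < q i0 := mul_pos (Real.exp_pos _) hi0
  have htpos : 0 < t := by
    have := hqt i0
    nlinarith [hc0 i0]
  exact ⟨t, htpos, fun i => by rw [mul_comm]; exact hqt i⟩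
end

section
/- Fix γ ∈ (0,1] and let C be a row-stochastic n×n matrix with left Perron vector c, Cᵀc = c, c positive and normalized. Then the map f(p) = (diag(1 − e^{−γp}) + Cᵀ diag(e^{−γp})) p has exactly one fixed point p⋆ in the probability simplex, characterized by p⋆ᵢ e^{−γp⋆ᵢ} = κ cᵢ for a suitable κ > 0. -/
open Matrix
open Set
section AuxStmt10

lemma gStrictMono {γ : ℝ} (hγ0 : 0 < γ) (hγ1 : γ ≤ 1) :
    StrictMonoOn (fun x : ℝ => x * Real.exp (-(γ * x))) (Set.Icc 0 1) := by
  have hd : ∀ x : ℝ, HasDerivAt (fun x : ℝ => x * Real.exp (-(γ * x)))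
      (1 * Real.exp (-(γ * x)) + x * (Real.exp (-(γ * x)) * -γ)) x := by
    intro x
    have h1 : HasDerivAt (fun x : ℝ => -(γ * x)) (-γ) x := by
      exact ((hasDerivAt_id' x).const_mul γ).neg.congr_deriv (by ring)
    exact (hasDerivAt_id x).mul h1.exp
  apply strictMonoOn_of_deriv_pos (convex_Icc 0 1)
  · exact Continuous.continuousOn (by continuity)
  · intro x hx
    rw [interior_Icc] at hx
    rw [(hd x).deriv]
    have he := Real.exp_pos (-(γ * x))
    have hlt : γ * x < 1 := by nlinarith [hx.1, hx.2]
    nlinarith [hx.1]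

lemma powNonneg {n : ℕ} {C : Matrix (Fin n) (Fin n) ℝ} (hC0 : ∀ i j, 0 ≤ C i j) :
    ∀ m : ℕ, 0 < m → ∀ i j, 0 ≤ (C ^ m) i j := by
  intro m hm
  induction m with
  | zero => omega
  | succ k ih =>
    rcases Nat.eq_zero_or_pos k with hk | hk
    · subst hk; simpa using hC0
    · intro i j
      rw [pow_succ, Matrix.mul_apply]
      exact Finset.sum_nonneg fun l _ => mul_nonneg (ih hk i l) (hC0 l j)

lemma eigPow {n : ℕ} {C : Matrix (Fin n) (Fin n) ℝ} {w : Fin n → ℝ}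
    (hw : Cᵀ.mulVec w = w) : ∀ m : ℕ, ((C ^ m)ᵀ).mulVec w = w := by
  intro m
  induction m with
  | zero => simp [Matrix.mulVec_one]
  | succ k ih =>
    rw [pow_succ, Matrix.transpose_mul, ← Matrix.mulVec_mulVec, ih, hw]

/-- the inverse of `g` on `[0,1]`, as a continuous function on `[0, e^{-γ}]`. -/
lemma ginv_exists {γ : ℝ} (hγ0 : 0 < γ) (hγ1 : γ ≤ 1) :
    ∃ ginv : ℝ → ℝ,
      (∀ y ∈ Icc (0:ℝ) (Real.exp (-γ)), ginv y ∈ Icc (0:ℝ) 1) ∧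
      (∀ y ∈ Icc (0:ℝ) (Real.exp (-γ)), ginv y * Real.exp (-(γ * ginv y)) = y) ∧
      (∀ x ∈ Icc (0:ℝ) 1, ginv (x * Real.exp (-(γ * x))) = x) ∧
      ContinuousOn ginv (Icc (0:ℝ) (Real.exp (-γ))) := by
  set g : ℝ → ℝ := fun x => x * Real.exp (-(γ * x)) with hg
  set E : ℝ := Real.exp (-γ) with hE
  have hg0 : g 0 = 0 := by simp [hg]
  have hg1 : g 1 = E := by simp [hg, hE]
  have hmono := gStrictMono hγ0 hγ1
  have hgmem : ∀ x ∈ Icc (0:ℝ) 1, g x ∈ Icc (0:ℝ) E := by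
    intro x hx
    constructor
    · rw [← hg0]; exact hmono.monotoneOn (left_mem_Icc.2 zero_le_one) hx hx.1
    · rw [← hg1]; exact hmono.monotoneOn hx (right_mem_Icc.2 zero_le_one) hx.2
  have hcont : Continuous g := by continuity
  have hsurj : ∀ y ∈ Icc (0:ℝ) E, ∃ x ∈ Icc (0:ℝ) 1, g x = y := by
    intro y hy
    have := intermediate_value_Icc (zero_le_one (α := ℝ)) hcont.continuousOn
    rw [hg0, hg1] at this
    obtain ⟨x, hx, hxy⟩ := this hy
    exact ⟨x, hx, hxy⟩
  set G : Icc (0:ℝ) 1 → Icc (0:ℝ) E := fun x => ⟨g x, hgmem x x.2⟩ with hG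
  have hGmono : StrictMono G := by
    intro a b hab
    exact Subtype.mk_lt_mk.2 (hmono a.2 b.2 hab)
  have hGsurj : Function.Surjective G := by
    rintro ⟨y, hy⟩
    obtain ⟨x, hx, hxy⟩ := hsurj y hy
    exact ⟨⟨x, hx⟩, Subtype.ext hxy⟩
  set Giso := StrictMono.orderIsoOfSurjective G hGmono hGsurj with hGiso
  have hco : ∀ a, ((Giso a : Icc (0:ℝ) E) : ℝ) = g a := fun a =>
    congrArg Subtype.val (congrFun (StrictMono.coe_orderIsoOfSurjective G hGmono hGsurj) a)
  refine ⟨fun y => if h : y ∈ Icc (0:ℝ) E then (Giso.symm ⟨y, h⟩ : ℝ) else 0, ?_, ?_, ?_, ?_⟩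
  · intro y hy; beta_reduce; rw [dif_pos hy]; exact (Giso.symm ⟨y, hy⟩).2
  · intro y hy; beta_reduce; rw [dif_pos hy]
    have h2 := Giso.apply_symm_apply ⟨y, hy⟩
    have h3 := hco (Giso.symm ⟨y, hy⟩)
    have h4 := congrArg Subtype.val h2
    rw [h3] at h4
    exact h4
  · intro x hx
    have hmem := hgmem x hx
    beta_reduce
    rw [dif_pos hmem]
    have h2 : Giso ⟨x, hx⟩ = ⟨g x, hmem⟩ := Subtype.ext (hco ⟨x, hx⟩)
    have := Giso.symm_apply_apply ⟨x, hx⟩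
    rw [h2] at this
    exact congrArg Subtype.val this
  · rw [continuousOn_iff_continuous_restrict]
    have hres : (Icc (0:ℝ) E).restrict (fun y => if h : y ∈ Icc (0:ℝ) E then (Giso.symm ⟨y, h⟩ : ℝ) else 0)
        = fun z : Icc (0:ℝ) E => (Giso.symm z : ℝ) := by
      funext z
      exact dif_pos z.2
    refine (congrArg Continuous hres).mpr ?_
    exact continuous_subtype_val.comp (OrderIso.continuous Giso.symm)

end AuxStmt10

/-- For `γ ∈ (0,1]` and `C` irreducible row-stochastic with positive normalized left
Perron vector `c`, the map `f(p) = (diag(1 − e^{−γp}) + Cᵀ diag(e^{−γp})) p` has exactly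
one fixed point `p⋆` in the probability simplex, characterized by
`p⋆ᵢ e^{−γ p⋆ᵢ} = κ cᵢ` for a suitable `κ > 0`. -/
theorem stmt10 (n : ℕ) (γ : ℝ) (hγ : γ ∈ Set.Ioc (0 : ℝ) 1)
    (C : Matrix (Fin n) (Fin n) ℝ)
    (hC0 : ∀ i j, 0 ≤ C i j) (hC1 : ∀ i, ∑ j, C i j = 1)
    (hirr : ∀ i j, ∃ m : ℕ, 0 < m ∧ 0 < (C ^ m) i j)
    (c : Fin n → ℝ) (hc0 : ∀ i, 0 < c i) (hc1 : ∑ i, c i = 1)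
    (hcC : Cᵀ.mulVec c = c)
    (f : (Fin n → ℝ) → (Fin n → ℝ))
    (hf : ∀ p j, f p j = (1 - Real.exp (-(γ * p j))) * p j
        + ∑ i, C i j * (Real.exp (-(γ * p i)) * p i)) :
    ∃ p : Fin n → ℝ,
      ((∀ i, 0 ≤ p i) ∧ (∑ i, p i = 1) ∧ f p = p ∧
        ∃ κ : ℝ, 0 < κ ∧ ∀ i, p i * Real.exp (-(γ * p i)) = κ * c i) ∧
      ∀ q : Fin n → ℝ, (∀ i, 0 ≤ q i) → (∑ i, q i = 1) → f q = q → q = p := by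
  obtain ⟨hγ0, hγ1⟩ := hγ
  rcases Nat.eq_zero_or_pos n with hn | hn
  · subst hn; simp at hc1
  have : Nonempty (Fin n) := Fin.pos_iff_nonempty.1 hn
  obtain ⟨ginv, hmem, hg_ginv, hginv_g, hginvcont⟩ := ginv_exists hγ0 hγ1
  set E : ℝ := Real.exp (-γ) with hE
  obtain ⟨i0, -, hi0⟩ := Finset.exists_max_image Finset.univ c Finset.univ_nonempty
  set κmax : ℝ := E / c i0 with hκmax
  have hκmax0 : 0 < κmax := div_pos (Real.exp_pos _) (hc0 i0)
  have hκmaxE : κmax * c i0 = E := div_mul_cancel₀ E (hc0 i0).ne'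
  have hmul : ∀ κ ∈ Icc (0:ℝ) κmax, ∀ i, κ * c i ∈ Icc (0:ℝ) E := by
    intro κ hκ i
    refine ⟨mul_nonneg hκ.1 (hc0 i).le, ?_⟩
    calc κ * c i ≤ κ * c i0 := mul_le_mul_of_nonneg_left (hi0 i (Finset.mem_univ i)) hκ.1
    _ ≤ κmax * c i0 := mul_le_mul_of_nonneg_right hκ.2 (hc0 i0).le
    _ = E := hκmaxE
  set s : ℝ → ℝ := fun κ => ∑ i, ginv (κ * c i) with hs
  have hscont : ContinuousOn s (Icc 0 κmax) := by
    apply continuousOn_finset_sum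
    intro i _
    exact hginvcont.comp ((continuous_id.mul continuous_const).continuousOn)
      (fun κ hκ => hmul κ hκ i)
  have hginv0 : ginv 0 = 0 := by
    have := hginv_g 0 ⟨le_rfl, zero_le_one⟩
    simpa using this
  have hginvE : ginv E = 1 := by
    have := hginv_g 1 ⟨zero_le_one, le_rfl⟩
    simpa [hE] using this
  have hs0 : s 0 = 0 := by simp [hs, hginv0]
  have hs1 : 1 ≤ s κmax := by
    have h1 : ginv (κmax * c i0) = 1 := by rw [hκmaxE, hginvE]
    calc (1:ℝ) = ginv (κmax * c i0) := h1.symm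
    _ ≤ s κmax := Finset.single_le_sum
        (fun i _ => (hmem _ (hmul κmax ⟨hκmax0.le, le_rfl⟩ i)).1) (Finset.mem_univ i0)
  obtain ⟨κ, hκmem, hκs⟩ := intermediate_value_Icc hκmax0.le hscont ⟨by rw [hs0]; exact zero_le_one, hs1⟩
  set p : Fin n → ℝ := fun i => ginv (κ * c i) with hp
  have hp01 : ∀ i, p i ∈ Icc (0:ℝ) 1 := fun i => hmem _ (hmul κ hκmem i)
  have hpsum : ∑ i, p i = 1 := hκs
  have hpg : ∀ i, p i * Real.exp (-(γ * p i)) = κ * c i := fun i => hg_ginv _ (hmul κ hκmem i)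
  have hκpos : 0 < κ := by
    rcases eq_or_lt_of_le hκmem.1 with h | h
    · exfalso; rw [← h] at hκs; rw [hs0] at hκs; norm_num at hκs
    · exact h
  have hCc : ∀ j, ∑ i, C i j * c i = c j := by
    intro j
    have := congrFun hcC j
    simpa [Matrix.mulVec, dotProduct, Matrix.transpose_apply] using this
  -- p is a fixed point
  have hfix : f p = p := by
    funext j
    rw [hf]
    have hsum : ∑ i, C i j * (Real.exp (-(γ * p i)) * p i) = κ * c j := by
      have h1 : ∀ i, Real.exp (-(γ * p i)) * p i = κ * c i := by
        intro i; rw [mul_comm]; exact hpg i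
      calc ∑ i, C i j * (Real.exp (-(γ * p i)) * p i) = ∑ i, C i j * (κ * c i) := by
            exact Finset.sum_congr rfl fun i _ => by rw [h1 i]
      _ = κ * ∑ i, C i j * c i := by rw [Finset.mul_sum]; exact Finset.sum_congr rfl fun i _ => by ring
      _ = κ * c j := by rw [hCc j]
    rw [hsum]
    have h2 : Real.exp (-(γ * p j)) * p j = κ * c j := by rw [mul_comm]; exact hpg j
    nlinarith [h2]
  refine ⟨p, ⟨fun i => (hp01 i).1, hpsum, hfix, κ, hκpos, hpg⟩, ?_⟩
  -- uniqueness
  intro q hq0 hq1 hqfix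
  have hq1' : ∀ i, q i ≤ 1 := by
    intro i
    calc q i ≤ ∑ j, q j := Finset.single_le_sum (fun j _ => hq0 j) (Finset.mem_univ i)
    _ = 1 := hq1
  set v : Fin n → ℝ := fun i => Real.exp (-(γ * q i)) * q i with hv
  have hv0 : ∀ i, 0 ≤ v i := fun i => mul_nonneg (Real.exp_pos _).le (hq0 i)
  have hveig : Cᵀ.mulVec v = v := by
    funext j
    have h1 := hf q j
    have h2 := congrFun hqfix j
    rw [h1] at h2
    have h3 : ∑ i, C i j * (Real.exp (-(γ * q i)) * q i) = Real.exp (-(γ * q j)) * q j := by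
      nlinarith [h2]
    simpa [Matrix.mulVec, dotProduct, Matrix.transpose_apply, hv] using h3
  obtain ⟨j0, -, hj0⟩ := Finset.exists_min_image Finset.univ (fun i => v i / c i) Finset.univ_nonempty
  set t : ℝ := v j0 / c j0 with htdef
  have ht0 : 0 ≤ t := div_nonneg (hv0 j0) (hc0 j0).le
  set w : Fin n → ℝ := fun i => v i - t * c i with hw
  have hw0 : ∀ i, 0 ≤ w i := by
    intro i
    have := hj0 i (Finset.mem_univ i)
    have h2 : t * c i ≤ v i := (le_div_iff₀ (hc0 i)).1 this
    simpa [hw] using sub_nonneg.2 h2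
  have hwj0 : w j0 = 0 := by
    simp only [hw, htdef]
    rw [div_mul_cancel₀ _ (hc0 j0).ne']
    ring
  have hweig : Cᵀ.mulVec w = w := by
    have hwv : w = v - t • c := by funext i; simp [hw]
    rw [hwv, Matrix.mulVec_sub, Matrix.mulVec_smul, hveig, hcC]
  have hwzero : ∀ i, w i = 0 := by
    intro i
    obtain ⟨m, hm, hpos⟩ := hirr i j0
    have hpow := congrFun (eigPow hweig m) j0
    have hexp : ∑ i', (C ^ m) i' j0 * w i' = 0 := by
      rw [hwj0] at hpow
      simpa [Matrix.mulVec, dotProduct, Matrix.transpose_apply] using hpow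
    have hterm := (Finset.sum_eq_zero_iff_of_nonneg
      (fun i' _ => mul_nonneg (powNonneg hC0 m hm i' j0) (hw0 i'))).1 hexp i (Finset.mem_univ i)
    rcases mul_eq_zero.1 hterm with h | h
    · exact absurd h hpos.ne'
    · exact h
  have hqg : ∀ i, q i * Real.exp (-(γ * q i)) = t * c i := by
    intro i
    have h1 := hwzero i
    simp only [hw] at h1
    have h2 : v i = t * c i := by linarith
    rw [mul_comm]; exact h2
  -- compare t and κ using strict monotonicity
  have hgm := gStrictMono hγ0 hγ1
  have hcompare : ∀ (a b : ℝ), a ∈ Icc (0:ℝ) 1 → b ∈ Icc (0:ℝ) 1 →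
      a * Real.exp (-(γ * a)) ≤ b * Real.exp (-(γ * b)) → a ≤ b := by
    intro a b ha hb hab
    by_contra hlt
    push_neg at hlt
    exact absurd hab (not_le.2 (hgm hb ha hlt))
  have hqmem : ∀ i, q i ∈ Icc (0:ℝ) 1 := fun i => ⟨hq0 i, hq1' i⟩
  have heqsum : ∑ i, q i = ∑ i, p i := by rw [hq1, hpsum]
  rcases le_total t κ with hle | hle
  · have hle' : ∀ i, q i ≤ p i := by
      intro i
      apply hcompare _ _ (hqmem i) (hp01 i)
      rw [hqg i, hpg i]
      exact mul_le_mul_of_nonneg_right hle (hc0 i).le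
    funext i
    by_contra hne
    have hlt : q i < p i := lt_of_le_of_ne (hle' i) hne
    have := Finset.sum_lt_sum (fun j _ => hle' j) ⟨i, Finset.mem_univ i, hlt⟩
    rw [heqsum] at this
    exact lt_irrefl _ this
  · have hle' : ∀ i, p i ≤ q i := by
      intro i
      apply hcompare _ _ (hp01 i) (hqmem i)
      rw [hqg i, hpg i]
      exact mul_le_mul_of_nonneg_right hle (hc0 i).le
    funext i
    by_contra hne
    have hlt : p i < q i := lt_of_le_of_ne (hle' i) (Ne.symm hne)
    have := Finset.sum_lt_sum (fun j _ => hle' j) ⟨i, Finset.mem_univ i, hlt⟩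
    rw [heqsum] at this
    exact lt_irrefl _ this
end

section
/- Fix γ ∈ (0,1] and let C be a row-stochastic n×n matrix. The Jacobian of the map f(p) = (diag(e^{−γp}) + Cᵀ diag(1 − e^{−γp})) p at any probability vector p is the matrix Q(p)ᵀ = diag(e^{−γp} − γp⊙e^{−γp}) + Cᵀ diag(1 − e^{−γp} + γp⊙e^{−γp}), and this matrix is column-stochastic (nonnegative entries, columns summing to 1). -/
open ContinuousLinearMap
/-- For `γ ∈ (0,1]` and `C` row-stochastic, the Jacobian of
`f(p) = (diag(e^{−γp}) + Cᵀ diag(1 − e^{−γp})) p` at a probability vector `p` is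
`Q(p)ᵀ = diag(e^{−γp} − γp⊙e^{−γp}) + Cᵀ diag(1 − e^{−γp} + γp⊙e^{−γp})`,
and this matrix is column-stochastic. -/
theorem stmt12 (n : ℕ) (γ : ℝ) (hγ : γ ∈ Set.Ioc (0 : ℝ) 1)
    (C : Matrix (Fin n) (Fin n) ℝ)
    (hC0 : ∀ i j, 0 ≤ C i j) (hC1 : ∀ i, ∑ j, C i j = 1)
    (f : (Fin n → ℝ) → (Fin n → ℝ))
    (hf : ∀ p j, f p j = Real.exp (-(γ * p j)) * p j
        + ∑ i, C i j * ((1 - Real.exp (-(γ * p i))) * p i))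
    (p : Fin n → ℝ) (hp0 : ∀ i, 0 ≤ p i) (hp1 : ∑ i, p i = 1)
    (M : Matrix (Fin n) (Fin n) ℝ)
    (hM : ∀ j i, M j i =
        (if j = i then Real.exp (-(γ * p i)) - γ * p i * Real.exp (-(γ * p i)) else 0)
        + C i j * (1 - Real.exp (-(γ * p i)) + γ * p i * Real.exp (-(γ * p i)))) :
    (∀ v : Fin n → ℝ, fderiv ℝ f p v = M.mulVec v) ∧
    (∀ j i, 0 ≤ M j i) ∧ (∀ i, ∑ j, M j i = 1) := by
  obtain ⟨hγ0, hγ1⟩ := hγ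
  -- scalar derivative lemmas
  have hφ : ∀ x : ℝ, HasDerivAt (fun x => Real.exp (-(γ * x)) * x)
      (Real.exp (-(γ * x)) - γ * x * Real.exp (-(γ * x))) x := by
    intro x
    have h1 : HasDerivAt (fun x : ℝ => -(γ * x)) (-γ) x := by
      have h := ((hasDerivAt_id x).const_mul γ).neg
      simp only [id_eq, mul_one] at h
      exact h
    have h2 := h1.exp
    have h3 := h2.mul (hasDerivAt_id x)
    simp only [id_eq] at h3
    exact h3.congr_deriv (by ring)
  have hψ : ∀ x : ℝ, HasDerivAt (fun x => (1 - Real.exp (-(γ * x))) * x)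
      (1 - Real.exp (-(γ * x)) + γ * x * Real.exp (-(γ * x))) x := by
    intro x
    have h1 : HasDerivAt (fun x : ℝ => -(γ * x)) (-γ) x := by
      have h := ((hasDerivAt_id x).const_mul γ).neg
      simp only [id_eq, mul_one] at h
      exact h
    have h2 := (h1.exp.const_sub 1).mul (hasDerivAt_id x)
    simp only [id_eq] at h2
    exact h2.congr_deriv (by ring)
  set a : Fin n → ℝ := fun i => Real.exp (-(γ * p i)) - γ * p i * Real.exp (-(γ * p i)) with ha
  set b : Fin n → ℝ := fun i => 1 - Real.exp (-(γ * p i)) + γ * p i * Real.exp (-(γ * p i)) with hb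
  set L : Fin n → (Fin n → ℝ) →L[ℝ] ℝ :=
    fun j => a j • (proj j : (Fin n → ℝ) →L[ℝ] ℝ) + ∑ i, (C i j * b i) • (proj i : (Fin n → ℝ) →L[ℝ] ℝ)
    with hL
  have hF : HasFDerivAt f (ContinuousLinearMap.pi L) p := by
    have hfun : f = fun q j => Real.exp (-(γ * q j)) * q j
        + ∑ i, C i j * ((1 - Real.exp (-(γ * q i))) * q i) := by
      funext q j; exact hf q j
    rw [hfun]
    apply hasFDerivAt_pi.2
    intro j
    have hA : HasFDerivAt (fun q : Fin n → ℝ => Real.exp (-(γ * q j)) * q j)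
        (a j • (proj j : (Fin n → ℝ) →L[ℝ] ℝ)) p :=
      (hφ (p j)).comp_hasFDerivAt (f := fun q : Fin n → ℝ => q j) p (hasFDerivAt_apply j p)
    have hB : HasFDerivAt (fun q : Fin n → ℝ => ∑ i, C i j * ((1 - Real.exp (-(γ * q i))) * q i))
        (∑ i, (C i j * b i) • (proj i : (Fin n → ℝ) →L[ℝ] ℝ)) p := by
      apply HasFDerivAt.fun_sum
      intro i _
      have hterm : HasFDerivAt (fun q : Fin n → ℝ => (1 - Real.exp (-(γ * q i))) * q i)
          (b i • (proj i : (Fin n → ℝ) →L[ℝ] ℝ)) p :=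
        (hψ (p i)).comp_hasFDerivAt (f := fun q : Fin n → ℝ => q i) p (hasFDerivAt_apply i p)
      simpa [smul_smul] using hterm.const_mul (C i j)
    exact hA.add hB
  have hexp_le : ∀ i, Real.exp (-(γ * p i)) ≤ 1 := by
    intro i
    apply Real.exp_le_one_iff.2
    simp only [neg_nonpos]
    exact mul_nonneg hγ0.le (hp0 i)
  have hple : ∀ i, p i ≤ 1 := by
    intro i
    calc p i = ∑ k ∈ {i}, p k := by simp
    _ ≤ ∑ k, p k := Finset.sum_le_sum_of_subset_of_nonneg (Finset.subset_univ _)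
        (fun k _ _ => hp0 k)
    _ = 1 := hp1
  have hanonneg : ∀ i, 0 ≤ a i := by
    intro i
    have : γ * p i ≤ 1 := by
      calc γ * p i ≤ 1 * 1 := mul_le_mul hγ1 (hple i) (hp0 i) zero_le_one
      _ = 1 := one_mul 1
    have h2 : 0 ≤ Real.exp (-(γ * p i)) * (1 - γ * p i) :=
      mul_nonneg (Real.exp_pos _).le (by linarith)
    simp only [ha]; nlinarith
  have hbnonneg : ∀ i, 0 ≤ b i := by
    intro i
    have := hexp_le i
    have h2 : 0 ≤ γ * p i * Real.exp (-(γ * p i)) :=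
      mul_nonneg (mul_nonneg hγ0.le (hp0 i)) (Real.exp_pos _).le
    simp only [hb]; linarith
  refine ⟨?_, ?_, ?_⟩
  · intro v
    rw [hF.fderiv]
    funext j
    have hR : M.mulVec v j = a j * v j + ∑ i, C i j * b i * v i := by
      simp only [Matrix.mulVec, dotProduct, hM, add_mul, ite_mul, zero_mul,
        Finset.sum_add_distrib, Finset.sum_ite_eq, Finset.mem_univ, if_true, ha, hb,
        mul_assoc]
    rw [hR]
    simp only [ContinuousLinearMap.pi_apply, hL, ContinuousLinearMap.add_apply,
      ContinuousLinearMap.smul_apply, ContinuousLinearMap.sum_apply, proj_apply, smul_eq_mul]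
  · intro j i
    rw [hM]
    have h1 : 0 ≤ C i j * b i := mul_nonneg (hC0 i j) (hbnonneg i)
    have h2 := hanonneg i
    simp only [ha, hb] at h1 h2
    by_cases h : j = i
    · subst h; rw [if_pos rfl]; linarith
    · simp only [h, if_false]; linarith
  · intro i
    have hcol : ∑ j, M j i = a i + (∑ j, C i j) * b i := by
      simp only [hM, Finset.sum_add_distrib, Finset.sum_ite_eq', Finset.mem_univ, if_true,
        ← Finset.sum_mul, ha, hb]
    rw [hcol, hC1, one_mul]
    simp only [ha, hb]
    ring
end

section
/- Fix γ ∈ (0, 1/2] and let C be an n×n row-stochastic matrix. The Jacobian of the map f(p) = (diag(γp) + Cᵀ diag(1 − γp)) p at p ∈ Sₙ₋₁ is Q(p)ᵀ = diag(2γp) + Cᵀ diag(1 − 2γp), which is column-stochastic; consequently f is a contraction on Sₙ₋₁ in the ℓ₁ norm. -/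
/-- For `γ ∈ (0,1/2]` and `C` row-stochastic, the Jacobian of the one-step
DeGroot–Friedkin map `f(p) = (diag(γp) + Cᵀ diag(1 − γp)) p` at `p` in the simplex is
`Q(p)ᵀ = diag(2γp) + Cᵀ diag(1 − 2γp)`, which is column-stochastic; consequently `f`
is an ℓ₁-contraction on the simplex. -/
theorem stmt13 (n : ℕ) (γ : ℝ) (hγ : γ ∈ Set.Ioc (0 : ℝ) (1 / 2))
    (C : Matrix (Fin n) (Fin n) ℝ)
    (hC0 : ∀ i j, 0 ≤ C i j) (hC1 : ∀ i, ∑ j, C i j = 1)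
    (f : (Fin n → ℝ) → (Fin n → ℝ))
    (hf : ∀ p j, f p j = γ * p j * p j + ∑ i, C i j * ((1 - γ * p i) * p i)) :
    (∀ p : Fin n → ℝ, (∀ i, 0 ≤ p i) → (∑ i, p i = 1) →
      ∀ M : Matrix (Fin n) (Fin n) ℝ,
        (∀ j i, M j i = (if j = i then 2 * γ * p i else 0) + C i j * (1 - 2 * γ * p i)) →
        (∀ v : Fin n → ℝ, fderiv ℝ f p v = M.mulVec v) ∧
        (∀ j i, 0 ≤ M j i) ∧ (∀ i, ∑ j, M j i = 1)) ∧
    (∀ p q : Fin n → ℝ, (∀ i, 0 ≤ p i) → (∑ i, p i = 1) →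
      (∀ i, 0 ≤ q i) → (∑ i, q i = 1) →
      ∑ j, |f q j - f p j| ≤ ∑ j, |q j - p j|) := by
  obtain ⟨hγ0, hγ2⟩ := hγ
  have hfe : f = fun p j => γ * p j * p j + ∑ i, C i j * ((1 - γ * p i) * p i) :=
    funext fun p => funext (hf p)
  constructor
  · intro p hp hps M hM
    have hp1 : ∀ i, p i ≤ 1 := fun i => by
      calc p i ≤ ∑ k, p k := Finset.single_le_sum (fun k _ => hp k) (Finset.mem_univ i)
      _ = 1 := hps
    subst hfe
    have hpr : ∀ i : Fin n, HasFDerivAt (fun p : Fin n → ℝ => p i)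
        (ContinuousLinearMap.proj i : (Fin n → ℝ) →L[ℝ] ℝ) p :=
      fun i => hasFDerivAt_apply i p
    have hA : ∀ j : Fin n, HasFDerivAt
        (fun p : Fin n → ℝ => γ * p j * p j + ∑ i, C i j * ((1 - γ * p i) * p i))
        ((γ * p j) • (ContinuousLinearMap.proj j : (Fin n → ℝ) →L[ℝ] ℝ)
          + p j • (γ • ContinuousLinearMap.proj j)
          + ∑ i, (C i j) • ((1 - γ * p i) • (ContinuousLinearMap.proj i : (Fin n → ℝ) →L[ℝ] ℝ)
              + p i • ((0 : (Fin n → ℝ) →L[ℝ] ℝ) - γ • ContinuousLinearMap.proj i))) p :=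
      fun j => (((hpr j).const_mul γ).mul (hpr j)).add
        (HasFDerivAt.fun_sum fun i _ =>
          (((hasFDerivAt_const (1:ℝ) p).sub ((hpr i).const_mul γ)).mul (hpr i)).const_mul (C i j))
    refine ⟨?_, ?_, ?_⟩
    · intro v
      funext j
      rw [fderiv_pi (fun j => (hA j).differentiableAt)]
      rw [ContinuousLinearMap.pi_apply, (hA j).fderiv]
      simp only [ContinuousLinearMap.add_apply, ContinuousLinearMap.smul_apply,
        ContinuousLinearMap.sub_apply, ContinuousLinearMap.coe_sum', Finset.sum_apply,
        ContinuousLinearMap.proj_apply, ContinuousLinearMap.zero_apply, smul_eq_mul]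
      rw [Matrix.mulVec, dotProduct]
      simp only [hM, add_mul, ite_mul, zero_mul, Finset.sum_add_distrib,
        Finset.sum_ite_eq, Finset.mem_univ, if_true]
      ring_nf
    · intro j i
      rw [hM]
      have h1 : 0 ≤ 1 - 2 * γ * p i := by nlinarith [hp i, hp1 i]
      have h2 : 0 ≤ 2 * γ * p i := mul_nonneg (by linarith) (hp i)
      have h3 := mul_nonneg (hC0 i j) h1
      split <;> linarith
    · intro i
      simp only [hM, Finset.sum_add_distrib, Finset.sum_ite_eq', Finset.mem_univ, if_true,
        ← Finset.sum_mul, hC1]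
      ring
  · intro p q hp hps hq hqs
    have hp1 : ∀ i, p i ≤ 1 := fun i => by
      calc p i ≤ ∑ k, p k := Finset.single_le_sum (fun k _ => hp k) (Finset.mem_univ i)
      _ = 1 := hps
    have hq1 : ∀ i, q i ≤ 1 := fun i => by
      calc q i ≤ ∑ k, q k := Finset.single_le_sum (fun k _ => hq k) (Finset.mem_univ i)
      _ = 1 := hqs
    have hs0 : ∀ i, 0 ≤ γ * (q i + p i) := fun i => mul_nonneg hγ0.le (by linarith [hp i, hq i])
    have hs1 : ∀ i, γ * (q i + p i) ≤ 1 := fun i => by nlinarith [hp1 i, hq1 i, hp i, hq i]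
    have key : ∀ j, f q j - f p j
        = γ * (q j + p j) * (q j - p j)
          + ∑ i, C i j * ((1 - γ * (q i + p i)) * (q i - p i)) := by
      intro j
      rw [hf, hf, add_sub_add_comm, ← Finset.sum_sub_distrib]
      congr 1
      · ring
      · exact Finset.sum_congr rfl fun i _ => by ring
    have bound : ∀ j, |f q j - f p j|
        ≤ γ * (q j + p j) * |q j - p j|
          + ∑ i, C i j * ((1 - γ * (q i + p i)) * |q i - p i|) := by
      intro j
      rw [key j]
      refine (abs_add_le _ _).trans (add_le_add ?_ ?_)
      · rw [abs_mul, abs_of_nonneg (hs0 j)]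
      · refine (Finset.abs_sum_le_sum_abs _ _).trans (Finset.sum_le_sum fun i _ => ?_)
        rw [abs_mul, abs_mul, abs_of_nonneg (hC0 i j), abs_of_nonneg (by linarith [hs1 i])]
    calc ∑ j, |f q j - f p j|
        ≤ ∑ j, (γ * (q j + p j) * |q j - p j|
            + ∑ i, C i j * ((1 - γ * (q i + p i)) * |q i - p i|)) :=
          Finset.sum_le_sum fun j _ => bound j
      _ = ∑ j, γ * (q j + p j) * |q j - p j|
            + ∑ i, (∑ j, C i j) * ((1 - γ * (q i + p i)) * |q i - p i|) := by
          rw [Finset.sum_add_distrib, Finset.sum_comm]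
          simp [Finset.sum_mul]
      _ = ∑ j, |q j - p j| := by
          simp only [hC1, one_mul, ← Finset.sum_add_distrib]
          exact Finset.sum_congr rfl fun j _ => by ring
end

section
/- Fix γ ∈ (0, 1/2] and let C be an irreducible row-stochastic matrix with positive left Perron vector c (Cᵀc = c, Σᵢcᵢ = 1). Any fixed point p⋆ ∈ Sₙ₋₁ of f(p) = (diag(γp) + Cᵀ diag(1 − γp)) p satisfies (1 − γp⋆ᵢ)p⋆ᵢ = κ cᵢ for all i, where κ = 1 − γ‖p⋆‖₂². -/
open Matrix

lemma pow_nonneg_entries {n : ℕ} (C : Matrix (Fin n) (Fin n) ℝ)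
    (hC0 : ∀ i j, 0 ≤ C i j) : ∀ m, ∀ i j, 0 ≤ (C ^ m) i j := by
  intro m
  induction m with
  | zero => intro i j; simp [Matrix.one_apply]; split <;> norm_num
  | succ k ih =>
      intro i j
      rw [pow_succ, Matrix.mul_apply]
      exact Finset.sum_nonneg fun l _ => mul_nonneg (ih i l) (hC0 l j)

/-- For `γ ∈ (0,1/2]` and `C` irreducible row-stochastic with positive normalized left
Perron vector `c`, any fixed point `p⋆` in the simplex of
`f(p) = (diag(γp) + Cᵀ diag(1 − γp)) p` satisfies
`(1 − γp⋆ᵢ)p⋆ᵢ = κ cᵢ` with `κ = 1 − γ‖p⋆‖₂²`. -/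
theorem stmt14 (n : ℕ) (γ : ℝ) (hγ : γ ∈ Set.Ioc (0 : ℝ) (1 / 2))
    (C : Matrix (Fin n) (Fin n) ℝ)
    (hC0 : ∀ i j, 0 ≤ C i j) (hC1 : ∀ i, ∑ j, C i j = 1)
    (hirr : ∀ i j, ∃ m : ℕ, 0 < m ∧ 0 < (C ^ m) i j)
    (c : Fin n → ℝ) (hc0 : ∀ i, 0 < c i) (hc1 : ∑ i, c i = 1)
    (hcC : Cᵀ.mulVec c = c)
    (p : Fin n → ℝ) (hp0 : ∀ i, 0 ≤ p i) (hp1 : ∑ i, p i = 1)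
    (hfix : ∀ j, γ * p j * p j + ∑ i, C i j * ((1 - γ * p i) * p i) = p j) :
    ∀ i, (1 - γ * p i) * p i = (1 - γ * ∑ i, (p i) ^ 2) * c i := by
  obtain ⟨hγ0, hγ2⟩ := hγ
  set q : Fin n → ℝ := fun i => (1 - γ * p i) * p i with hqdef
  have hp_le : ∀ i, p i ≤ 1 := by
    intro i
    calc p i ≤ ∑ j, p j := Finset.single_le_sum (fun j _ => hp0 j) (Finset.mem_univ i)
    _ = 1 := hp1
  have hq0 : ∀ i, 0 ≤ q i := by
    intro i
    apply mul_nonneg _ (hp0 i)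
    have : γ * p i ≤ 1 := by nlinarith [hp0 i, hp_le i]
    linarith
  -- q is fixed by Cᵀ
  have hqfix : Cᵀ.mulVec q = q := by
    funext j
    have h := hfix j
    simp only [Matrix.mulVec, Matrix.transpose_apply, dotProduct, hqdef]
    linarith [h]
  have hn : 0 < n := by
    by_contra h
    push_neg at h
    interval_cases n
    simp at hp1
  haveI : Nonempty (Fin n) := ⟨⟨0, hn⟩⟩
  obtain ⟨i0, _, hi0⟩ := Finset.exists_min_image Finset.univ (fun i => q i / c i)
    ⟨⟨0, hn⟩, Finset.mem_univ _⟩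
  set t : ℝ := q i0 / c i0 with htdef
  set v : Fin n → ℝ := fun i => q i - t * c i with hvdef
  have hv0 : ∀ i, 0 ≤ v i := by
    intro i
    have h := (le_div_iff₀ (hc0 i)).mp (hi0 i (Finset.mem_univ i))
    simp only [hvdef]
    linarith
  have hvi0 : v i0 = 0 := by
    simp only [hvdef, htdef]
    rw [div_mul_cancel₀ (q i0) (ne_of_gt (hc0 i0))]
    ring
  have hvfix : Cᵀ.mulVec v = v := by
    have : v = q - t • c := by funext i; simp [hvdef, smul_eq_mul]
    rw [this, Matrix.mulVec_sub, Matrix.mulVec_smul, hqfix, hcC]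
  have hpowfix : ∀ m : ℕ, ((Cᵀ) ^ m).mulVec v = v := by
    intro m
    induction m with
    | zero => simp
    | succ k ih => rw [pow_succ, ← Matrix.mulVec_mulVec, hvfix, ih]
  have hvzero : ∀ j, v j = 0 := by
    intro j
    by_contra hj
    have hvj : 0 < v j := lt_of_le_of_ne (hv0 j) (Ne.symm hj)
    obtain ⟨m, _, hm⟩ := hirr j i0
    have h1 : v i0 = ∑ k, (C ^ m) k i0 * v k := by
      conv_lhs => rw [← hpowfix m]
      simp only [Matrix.mulVec, dotProduct, ← Matrix.transpose_pow,
        Matrix.transpose_apply]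
    have h2 : (C ^ m) j i0 * v j ≤ ∑ k, (C ^ m) k i0 * v k :=
      Finset.single_le_sum
        (fun k _ => mul_nonneg (pow_nonneg_entries C hC0 m k i0) (hv0 k))
        (Finset.mem_univ j)
    nlinarith
  have hqc : ∀ i, q i = t * c i := by
    intro i
    have := hvzero i
    simp only [hvdef] at this
    linarith
  have hsumq : ∑ i, q i = 1 - γ * ∑ i, (p i) ^ 2 := by
    simp only [hqdef]
    have he : ∀ i, (1 - γ * p i) * p i = p i - γ * (p i) ^ 2 := fun i => by ring
    rw [Finset.sum_congr rfl fun i _ => he i, Finset.sum_sub_distrib, hp1,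
      ← Finset.mul_sum]
  have ht : t = 1 - γ * ∑ i, (p i) ^ 2 := by
    rw [← hsumq]
    rw [Finset.sum_congr rfl (fun i _ => hqc i), ← Finset.mul_sum, hc1, mul_one]
  intro i
  have := hqc i
  simp only [hqdef] at this
  rw [this, ht]
end

section
/- Let γ > 0 and let C be an irreducible row-stochastic n×n matrix with positive left Perron vector c, Cᵀc = c, Σᵢ cᵢ = 1. Then the map f(p) = (diag(1 − γp) + Cᵀ diag(γp)) p has a unique fixed point p⋆ in the interior of the probability simplex, given explicitly by p⋆ᵢ = √cᵢ / Σⱼ √cⱼ. -/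
open Matrix

private lemma auxPowNonneg {n : ℕ} (C : Matrix (Fin n) (Fin n) ℝ)
    (hC0 : ∀ i j, 0 ≤ C i j) : ∀ m i j, 0 ≤ (C ^ m) i j := by
  intro m
  induction m with
  | zero => intro i j; simp [Matrix.one_apply]; split <;> norm_num
  | succ m ih =>
    intro i j
    rw [pow_succ, Matrix.mul_apply]
    exact Finset.sum_nonneg fun k _ => mul_nonneg (ih i k) (hC0 k j)

private lemma auxPowMulVec {n : ℕ} (M : Matrix (Fin n) (Fin n) ℝ) (v : Fin n → ℝ)
    (h : M.mulVec v = v) : ∀ m, (M ^ m).mulVec v = v := by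
  intro m
  induction m with
  | zero => simp
  | succ m ih => rw [pow_succ', ← Matrix.mulVec_mulVec, ih, h]

private lemma auxZero {n : ℕ} (C : Matrix (Fin n) (Fin n) ℝ)
    (hC0 : ∀ i j, 0 ≤ C i j)
    (hirr : ∀ i j, ∃ m : ℕ, 0 < m ∧ 0 < (C ^ m) i j)
    (v : Fin n → ℝ) (hv0 : ∀ i, 0 ≤ v i) (hv : Cᵀ.mulVec v = v)
    (k : Fin n) (hk : v k = 0) : ∀ j, v j = 0 := by
  intro j
  by_contra hj
  have hvj : 0 < v j := lt_of_le_of_ne (hv0 j) (Ne.symm hj)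
  obtain ⟨m, hm, hpos⟩ := hirr j k
  have hpow : ((Cᵀ) ^ m).mulVec v = v := auxPowMulVec _ _ hv m
  have hvk : v k = ∑ i, (C ^ m) i k * v i := by
    conv_lhs => rw [← hpow]
    simp [Matrix.mulVec, dotProduct, ← Matrix.transpose_pow,
      Matrix.transpose_apply]
  have hge : (C ^ m) j k * v j ≤ ∑ i, (C ^ m) i k * v i :=
    Finset.single_le_sum
      (fun i _ => mul_nonneg (auxPowNonneg C hC0 m i k) (hv0 i)) (Finset.mem_univ j)
  have : 0 < v k := hvk ▸ lt_of_lt_of_le (mul_pos hpos hvj) hge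
  linarith

/-- For `γ > 0` and `C` irreducible row-stochastic with positive normalized left Perron
vector `c`, the map `f(p) = (diag(1 − γp) + Cᵀ diag(γp)) p` has a unique fixed point in
the interior of the simplex, given by `p⋆ᵢ = √cᵢ / Σⱼ √cⱼ`. -/
theorem stmt15 (n : ℕ) (γ : ℝ) (hγ : 0 < γ)
    (C : Matrix (Fin n) (Fin n) ℝ)
    (hC0 : ∀ i j, 0 ≤ C i j) (hC1 : ∀ i, ∑ j, C i j = 1)
    (hirr : ∀ i j, ∃ m : ℕ, 0 < m ∧ 0 < (C ^ m) i j)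
    (c : Fin n → ℝ) (hc0 : ∀ i, 0 < c i) (hc1 : ∑ i, c i = 1)
    (hcC : Cᵀ.mulVec c = c)
    (f : (Fin n → ℝ) → (Fin n → ℝ))
    (hf : ∀ p j, f p j = (1 - γ * p j) * p j + ∑ i, C i j * (γ * p i * p i))
    (pstar : Fin n → ℝ)
    (hpstar : ∀ i, pstar i = Real.sqrt (c i) / ∑ j, Real.sqrt (c j)) :
    ((∀ i, 0 < pstar i) ∧ (∑ i, pstar i = 1) ∧ f pstar = pstar) ∧
    ∀ q : Fin n → ℝ, (∀ i, 0 < q i) → (∑ i, q i = 1) → f q = q → q = pstar := by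
  have hne : (Finset.univ : Finset (Fin n)).Nonempty := by
    apply Finset.nonempty_of_sum_ne_zero (f := c)
    rw [hc1]; norm_num
  set S : ℝ := ∑ j, Real.sqrt (c j) with hS
  have hSpos : 0 < S :=
    Finset.sum_pos (fun i _ => Real.sqrt_pos.2 (hc0 i)) hne
  have hsq : ∀ i, pstar i * pstar i = c i / (S * S) := by
    intro i
    rw [hpstar i, div_mul_div_comm, Real.mul_self_sqrt (hc0 i).le]
  -- characterization of fixed points
  have hchar : ∀ q : Fin n → ℝ, f q = q ↔ ∀ j, ∑ i, C i j * (q i * q i) = q j * q j := by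
    intro q
    constructor
    · intro h j
      have h1 : f q j = q j := by rw [h]
      rw [hf] at h1
      have h2 : ∑ i, C i j * (γ * q i * q i) = γ * ∑ i, C i j * (q i * q i) := by
        rw [Finset.mul_sum]; exact Finset.sum_congr rfl fun i _ => by ring
      rw [h2] at h1
      have h3 : γ * (∑ i, C i j * (q i * q i)) = γ * (q j * q j) := by nlinarith
      exact mul_left_cancel₀ (ne_of_gt hγ) h3
    · intro h
      funext j
      rw [hf]
      have h2 : ∑ i, C i j * (γ * q i * q i) = γ * ∑ i, C i j * (q i * q i) := by
        rw [Finset.mul_sum]; exact Finset.sum_congr rfl fun i _ => by ring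
      rw [h2, h j]; ring
  have hcCj : ∀ j, ∑ i, C i j * c i = c j := by
    intro j
    have := congrFun hcC j
    simpa [Matrix.mulVec, dotProduct, Matrix.transpose_apply] using this
  refine ⟨⟨?_, ?_, ?_⟩, ?_⟩
  · intro i
    rw [hpstar i]
    exact div_pos (Real.sqrt_pos.2 (hc0 i)) hSpos
  · rw [Finset.sum_congr rfl fun i _ => hpstar i, ← Finset.sum_div, ← hS,
      div_self (ne_of_gt hSpos)]
  · rw [hchar]
    intro j
    have : ∑ i, C i j * (pstar i * pstar i) = (∑ i, C i j * c i) / (S * S) := by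
      rw [Finset.sum_div]
      exact Finset.sum_congr rfl fun i _ => by rw [hsq i]; ring
    rw [this, hcCj j, hsq j]
  · intro q hq0 hq1 hqf
    have hq := (hchar q).1 hqf
    set v : Fin n → ℝ := fun i => q i * q i with hv
    have hvC : Cᵀ.mulVec v = v := by
      funext j
      simpa [Matrix.mulVec, dotProduct, Matrix.transpose_apply, mul_assoc]
        using hq j
    obtain ⟨k, -, hk⟩ := Finset.exists_min_image Finset.univ (fun i => v i / c i) hne
    set t : ℝ := v k / c k with ht
    have htpos : 0 < t := div_pos (mul_pos (hq0 k) (hq0 k)) (hc0 k)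
    have hw0 : ∀ i, 0 ≤ v i - t * c i := by
      intro i
      have := hk i (Finset.mem_univ i)
      rw [div_le_div_iff₀ (hc0 k) (hc0 i)] at this
      have h2 : t * c k = v k := div_mul_cancel₀ _ (ne_of_gt (hc0 k))
      nlinarith [hc0 i, hc0 k]
    have hwC : Cᵀ.mulVec (fun i => v i - t * c i) = fun i => v i - t * c i := by
      have : (fun i => v i - t * c i) = v - t • c := by funext i; simp [smul_eq_mul]
      rw [this, Matrix.mulVec_sub, Matrix.mulVec_smul, hvC, hcC]
    have hwk : (fun i => v i - t * c i) k = 0 := by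
      simp only [ht, div_mul_cancel₀ _ (ne_of_gt (hc0 k))]
      ring
    have hall := auxZero C hC0 hirr _ hw0 hwC k hwk
    have hqv : ∀ i, q i = Real.sqrt t * Real.sqrt (c i) := by
      intro i
      have h1 : v i = t * c i := by have := hall i; linarith
      have : q i = Real.sqrt (t * c i) := by
        rw [← h1, hv]
        exact (Real.sqrt_mul_self (hq0 i).le).symm
      rw [this, Real.sqrt_mul htpos.le]
    have hsum : Real.sqrt t * S = 1 := by
      rw [← hq1, hS, Finset.mul_sum]
      exact Finset.sum_congr rfl fun i _ => (hqv i).symm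
    have hst : Real.sqrt t = 1 / S := by
      field_simp at hsum ⊢; linarith
    funext i
    rw [hqv i, hst, hpstar i]; ring
end
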